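/- Let H be a Hilbert space, {P_n}_{n∈Z} a resolution of the identity, and {λ_n}_{n∈Z} complex numbers such that η = sup_j ∑_{n≠j} |λ_n − λ_j|^{−2} < ∞. For X ∈ B(H), define ΓX by (ΓX)x = ∑_{m≠n} (λ_m − λ_n)^{−1} P_m X P_n x. Then ΓX is a well-defined bounded operator with ‖ΓX‖ ≤ √η ‖X‖. -/

import Mathlib

noncomputable section

local notation "⟪" x ", " y "⟫" => @inner ℂ _ _ x y

private lemma pyth_fin {H : Type*} [NormedAddCommGroup H] [InnerProductSpace ℂ H]
    {ι : Type*} (s : Finset ι) (c : ι → H)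
    (h : ∀ i ∈ s, ∀ j ∈ s, i ≠ j → ⟪c i, c j⟫ = 0) :
    ‖∑ i ∈ s, c i‖ ^ 2 = ∑ i ∈ s, ‖c i‖ ^ 2 := by
  have h1 : (‖∑ i ∈ s, c i‖ : ℝ) ^ 2 = RCLike.re ⟪∑ i ∈ s, c i, ∑ j ∈ s, c j⟫ := by
    rw [inner_self_eq_norm_sq]
  rw [h1, sum_inner]
  have h2 : ∀ i ∈ s, ⟪c i, ∑ j ∈ s, c j⟫ = ⟪c i, c i⟫ := by
    intro i hi
    rw [inner_sum]
    exact Finset.sum_eq_single i (fun j hj hne => h i hi j hj (Ne.symm hne)) (fun hi' => absurd hi hi')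
  rw [Finset.sum_congr rfl h2, map_sum]
  exact Finset.sum_congr rfl fun i _ => inner_self_eq_norm_sq (c i)

/-- Given a resolution of the identity `{P n}` on a Hilbert space and
scalars `λ n` with `η = sup_j ∑_{n ≠ j} |λ n − λ j|⁻² < ∞`, the transform
`(Γ X) x = ∑_{m ≠ n} (λ m − λ n)⁻¹ P m X P n x` defines a bounded operator with
`‖Γ X‖ ≤ √η ‖X‖`. -/
theorem stmt3 {H : Type*} [NormedAddCommGroup H] [InnerProductSpace ℂ H] [CompleteSpace H]
    (P : ℤ → H →L[ℂ] H)
    (hsa : ∀ n, IsSelfAdjoint (P n))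
    (hidem : ∀ n, IsIdempotentElem (P n))
    (hdisj : ∀ m n, m ≠ n → (P m) ∘L (P n) = 0)
    (hres : ∀ x : H, HasSum (fun n => P n x) x)
    (lam : ℤ → ℂ) (η : ℝ)
    (hsum : ∀ j : ℤ, Summable (fun n : {n : ℤ // n ≠ j} =>
      ((‖lam (n : ℤ) - lam j‖) ^ 2)⁻¹))
    (hη : ∀ j : ℤ, (∑' n : {n : ℤ // n ≠ j},
      ((‖lam (n : ℤ) - lam j‖) ^ 2)⁻¹) ≤ η)
    (X : H →L[ℂ] H) :
    ∃ G : H →L[ℂ] H,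
      (∀ x : H, HasSum
        (fun p : ℤ × ℤ =>
          if p.1 = p.2 then 0 else (lam p.1 - lam p.2)⁻¹ • P p.1 (X (P p.2 x)))
        (G x)) ∧
      ‖G‖ ≤ Real.sqrt η * ‖X‖ := by
  classical
  set f : H → ℤ × ℤ → H := fun x p =>
    if p.1 = p.2 then 0 else (lam p.1 - lam p.2)⁻¹ • P p.1 (X (P p.2 x)) with hf
  have hη0 : 0 ≤ η := le_trans (tsum_nonneg (fun n => by positivity)) (hη 0)
  have hadj : ∀ n, ContinuousLinearMap.adjoint (P n) = P n :=
    fun n => ContinuousLinearMap.isSelfAdjoint_iff'.mp (hsa n)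
  have hmove : ∀ n (u v : H), ⟪P n u, v⟫ = ⟪u, P n v⟫ := by
    intro n u v
    conv_lhs => rw [← hadj n]
    rw [ContinuousLinearMap.adjoint_inner_left]
  have hPP : ∀ n (z : H), P n (P n z) = P n z := by
    intro n z
    have := congrArg (fun (T : H →L[ℂ] H) => T z) (hidem n)
    simpa [ContinuousLinearMap.mul_apply] using this
  have horth : ∀ {m m' : ℤ}, m ≠ m' → ∀ (u v : H), ⟪P m u, P m' v⟫ = 0 := by
    intro m m' h u v
    rw [hmove]
    have h0 : P m (P m' v) = (P m ∘L P m') v := rfl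
    rw [h0, hdisj m m' h]
    simp
  have hself : ∀ n (z : H), ⟪P n z, P n z⟫ = ⟪z, P n z⟫ := by
    intro n z
    rw [hmove, hPP]
  have hK : ∀ w : H, ⟪w, w⟫ = ((‖w‖ ^ 2 : ℝ) : ℂ) := by
    intro w
    rw [inner_self_eq_norm_sq_to_K]
    norm_num
  -- Pythagoras: ∑ ‖P n z‖² = ‖z‖²
  have hPnormsq : ∀ z : H, HasSum (fun n => ‖P n z‖ ^ 2) (‖z‖ ^ 2) := by
    intro z
    have h1 : HasSum (fun n => ⟪z, P n z⟫) ⟪z, z⟫ := (innerSL ℂ z).hasSum (hres z)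
    have h3 : HasSum (fun n => ((‖P n z‖ ^ 2 : ℝ) : ℂ)) ((‖z‖ ^ 2 : ℝ) : ℂ) := by
      simpa only [← hself, hK] using h1
    exact Complex.hasSum_ofReal.mp h3
  have hPle : ∀ n (z : H), ‖P n z‖ ≤ ‖z‖ := by
    intro n z
    have h1 : ‖P n z‖ ^ 2 = RCLike.re ⟪P n z, P n z⟫ := (inner_self_eq_norm_sq _).symm
    have h2 : ⟪P n z, P n z⟫ = ⟪z, P n z⟫ := hself n z
    have h3 : ‖P n z‖ ^ 2 ≤ ‖z‖ * ‖P n z‖ := by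
      rw [h1, h2]
      calc RCLike.re ⟪z, P n z⟫ ≤ ‖(⟪z, P n z⟫ : ℂ)‖ := RCLike.re_le_norm _
        _ ≤ ‖z‖ * ‖P n z‖ := norm_inner_le_norm _ _
    nlinarith [norm_nonneg (P n z), norm_nonneg z]
  -- the finite key inequality
  have key : ∀ (x : H) (S : Finset (ℤ × ℤ)),
      ‖∑ p ∈ S, f x p‖ ^ 2 ≤ η * ∑ p ∈ S, ‖P p.1 (X (P p.2 x))‖ ^ 2 := by
    intro x S
    set v : ℤ × ℤ → H := fun p => P p.1 (X (P p.2 x)) with hv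
    have hforth : ∀ p q : ℤ × ℤ, p.1 ≠ q.1 → ⟪f x p, f x q⟫ = 0 := by
      intro p q h
      simp only [hf]
      split_ifs with h1 h2 h2 <;>
        simp [inner_smul_left, inner_smul_right, horth h]
    set M := S.image Prod.fst with hM
    have hfib : ∑ p ∈ S, f x p = ∑ m ∈ M, ∑ p ∈ S.filter (fun p => p.1 = m), f x p :=
      (Finset.sum_fiberwise_of_maps_to (fun p hp => Finset.mem_image_of_mem Prod.fst hp) _).symm
    have hpyth : ‖∑ p ∈ S, f x p‖ ^ 2
        = ∑ m ∈ M, ‖∑ p ∈ S.filter (fun p => p.1 = m), f x p‖ ^ 2 := by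
      rw [hfib]
      refine pyth_fin M _ ?_
      intro i _ j _ hij
      rw [sum_inner]
      refine Finset.sum_eq_zero fun p hp => ?_
      rw [inner_sum]
      refine Finset.sum_eq_zero fun q hq => ?_
      have hpi : p.1 = i := (Finset.mem_filter.mp hp).2
      have hqj : q.1 = j := (Finset.mem_filter.mp hq).2
      exact hforth p q (by rw [hpi, hqj]; exact hij)
    -- bound each fiber
    have hfiber : ∀ m ∈ M, ‖∑ p ∈ S.filter (fun p => p.1 = m), f x p‖ ^ 2
        ≤ η * ∑ p ∈ S.filter (fun p => p.1 = m), ‖v p‖ ^ 2 := by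
      intro m _
      set T := S.filter (fun p => p.1 = m) with hT
      set a : ℤ × ℤ → ℝ := fun p =>
        if p.1 = p.2 then 0 else (‖lam p.1 - lam p.2‖)⁻¹ with ha
      have hfa : ∀ p, ‖f x p‖ = a p * ‖v p‖ := by
        intro p
        simp only [hf, ha, hv]
        split_ifs with h1
        · simp
        · rw [norm_smul, norm_inv]
      have h1 : ‖∑ p ∈ T, f x p‖ ≤ ∑ p ∈ T, a p * ‖v p‖ := by
        calc ‖∑ p ∈ T, f x p‖ ≤ ∑ p ∈ T, ‖f x p‖ := norm_sum_le _ _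
          _ = ∑ p ∈ T, a p * ‖v p‖ := Finset.sum_congr rfl fun p _ => hfa p
      have hCS : (∑ p ∈ T, a p * ‖v p‖) ^ 2
          ≤ (∑ p ∈ T, a p ^ 2) * ∑ p ∈ T, ‖v p‖ ^ 2 :=
        Finset.sum_mul_sq_le_sq_mul_sq T a (fun p => ‖v p‖)
      have hA : ∑ p ∈ T, a p ^ 2 ≤ η := by
        -- restrict to p with p.2 ≠ m, push to the subtype sum
        have hzero : ∀ p ∈ T, a p ^ 2 ≠ 0 → p.2 ≠ m := by
          intro p hp h0 h2
          have hp1 : p.1 = m := (Finset.mem_filter.mp hp).2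
          apply h0
          simp [ha, hp1, h2]
        rw [← Finset.sum_filter_of_ne hzero]
        set T' := T.filter (fun p => p.2 ≠ m) with hT'
        have hinj : ∀ p ∈ T', ∀ q ∈ T', p.2 = q.2 → p = q := by
          intro p hp q hq h
          have hp1 : p.1 = m := (Finset.mem_filter.mp (Finset.mem_filter.mp hp).1).2
          have hq1 : q.1 = m := (Finset.mem_filter.mp (Finset.mem_filter.mp hq).1).2
          exact Prod.ext (hp1.trans hq1.symm) h
        set F : ℤ → ℝ := Set.indicator {n : ℤ | n ≠ m}
          (fun n => ((‖lam n - lam m‖) ^ 2)⁻¹) with hF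
        have hsummF : Summable F := by
          rw [← summable_subtype_iff_indicator]
          exact hsum m
        have htsumF : ∑' n, F n ≤ η := by
          rw [← tsum_subtype]
          exact hη m
        have hterm : ∀ p ∈ T', a p ^ 2 = F p.2 := by
          intro p hp
          have hp1 : p.1 = m := (Finset.mem_filter.mp (Finset.mem_filter.mp hp).1).2
          have hp2 : p.2 ≠ m := (Finset.mem_filter.mp hp).2
          have hne : p.1 ≠ p.2 := by rw [hp1]; exact (Ne.symm hp2)
          simp only [ha, hF, if_neg hne, hp1]
          have hmem : p.2 ∈ {n : ℤ | n ≠ m} := hp2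
          rw [Set.indicator_of_mem hmem, inv_pow, norm_sub_rev]
        calc ∑ p ∈ T', a p ^ 2 = ∑ p ∈ T', F p.2 := Finset.sum_congr rfl hterm
          _ = ∑ n ∈ T'.image Prod.snd, F n := (Finset.sum_image hinj).symm
          _ ≤ ∑' n, F n := Summable.sum_le_tsum _ (fun n _ => Set.indicator_nonneg (fun n _ => by positivity) n) hsummF
          _ ≤ η := htsumF
      have hBnn : (0:ℝ) ≤ ∑ p ∈ T, ‖v p‖ ^ 2 := Finset.sum_nonneg fun p _ => by positivity
      calc ‖∑ p ∈ T, f x p‖ ^ 2 ≤ (∑ p ∈ T, a p * ‖v p‖) ^ 2 := by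
            apply pow_le_pow_left₀ (norm_nonneg _) h1
        _ ≤ (∑ p ∈ T, a p ^ 2) * ∑ p ∈ T, ‖v p‖ ^ 2 := hCS
        _ ≤ η * ∑ p ∈ T, ‖v p‖ ^ 2 := mul_le_mul_of_nonneg_right hA hBnn
    calc ‖∑ p ∈ S, f x p‖ ^ 2
        = ∑ m ∈ M, ‖∑ p ∈ S.filter (fun p => p.1 = m), f x p‖ ^ 2 := hpyth
      _ ≤ ∑ m ∈ M, η * ∑ p ∈ S.filter (fun p => p.1 = m), ‖v p‖ ^ 2 :=
          Finset.sum_le_sum hfiber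
      _ = η * ∑ m ∈ M, ∑ p ∈ S.filter (fun p => p.1 = m), ‖v p‖ ^ 2 := by
          rw [Finset.mul_sum]
      _ = η * ∑ p ∈ S, ‖v p‖ ^ 2 := by
          rw [Finset.sum_fiberwise_of_maps_to (fun p hp => Finset.mem_image_of_mem Prod.fst hp)]
  -- summability of the squared norms over pairs and global bound
  have hVsum : ∀ x : H, Summable (fun p : ℤ × ℤ => ‖P p.1 (X (P p.2 x))‖ ^ 2) ∧
      (∑' p : ℤ × ℤ, ‖P p.1 (X (P p.2 x))‖ ^ 2) ≤ ‖X‖ ^ 2 * ‖x‖ ^ 2 := by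
    intro x
    set F : ℤ × ℤ → ℝ := fun q => ‖P q.2 (X (P q.1 x))‖ ^ 2 with hF
    have hFnn : 0 ≤ F := fun q => sq_nonneg _
    have hinner : ∀ n : ℤ, HasSum (fun m => F (n, m)) (‖X (P n x)‖ ^ 2) :=
      fun n => hPnormsq (X (P n x))
    have houtle : ∀ n : ℤ, ‖X (P n x)‖ ^ 2 ≤ ‖X‖ ^ 2 * ‖P n x‖ ^ 2 := by
      intro n
      have := X.le_opNorm (P n x)
      nlinarith [norm_nonneg (X (P n x)), norm_nonneg (P n x), norm_nonneg X]
    have hmaj : Summable fun n : ℤ => ‖X‖ ^ 2 * ‖P n x‖ ^ 2 :=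
      (hPnormsq x).summable.mul_left _
    have hout : Summable fun n : ℤ => ‖X (P n x)‖ ^ 2 :=
      Summable.of_nonneg_of_le (fun n => by positivity) houtle hmaj
    have hFsum : Summable F := by
      rw [summable_prod_of_nonneg hFnn]
      refine ⟨fun n => (hinner n).summable, ?_⟩
      have : (fun n : ℤ => ∑' m, F (n, m)) = fun n => ‖X (P n x)‖ ^ 2 :=
        funext fun n => (hinner n).tsum_eq
      rw [this]
      exact hout
    have hFtsum : ∑' q, F q ≤ ‖X‖ ^ 2 * ‖x‖ ^ 2 := by
      rw [Summable.tsum_prod hFsum]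
      have h1 : (fun n : ℤ => ∑' m, F (n, m)) = fun n => ‖X (P n x)‖ ^ 2 :=
        funext fun n => (hinner n).tsum_eq
      rw [h1]
      calc ∑' n, ‖X (P n x)‖ ^ 2 ≤ ∑' n, ‖X‖ ^ 2 * ‖P n x‖ ^ 2 :=
            Summable.tsum_le_tsum houtle hout hmaj
        _ = ‖X‖ ^ 2 * ∑' n, ‖P n x‖ ^ 2 := tsum_mul_left
        _ = ‖X‖ ^ 2 * ‖x‖ ^ 2 := by rw [(hPnormsq x).tsum_eq]
    have hswap : (fun p : ℤ × ℤ => ‖P p.1 (X (P p.2 x))‖ ^ 2)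
        = F ∘ (Equiv.prodComm ℤ ℤ) := by
      funext p
      rfl
    constructor
    · rw [hswap]
      exact hFsum.comp_injective (Equiv.prodComm ℤ ℤ).injective
    · rw [hswap]
      rw [Function.comp_def, (Equiv.prodComm ℤ ℤ).tsum_eq F]
      exact hFtsum
  -- summability of f x
  have hSf : ∀ x : H, Summable (f x) := by
    intro x
    rw [summable_iff_vanishing_norm]
    intro ε hε
    obtain ⟨s, hs⟩ := summable_iff_vanishing_norm.mp (hVsum x).1 (ε ^ 2 / (η + 1))
      (by positivity)
    refine ⟨s, fun t ht => ?_⟩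
    have h1 := hs t ht
    have h2 : ∑ p ∈ t, ‖P p.1 (X (P p.2 x))‖ ^ 2 < ε ^ 2 / (η + 1) := by
      calc ∑ p ∈ t, ‖P p.1 (X (P p.2 x))‖ ^ 2
          ≤ ‖∑ p ∈ t, ‖P p.1 (X (P p.2 x))‖ ^ 2‖ := le_abs_self _
        _ < _ := h1
    have h3 : ‖∑ p ∈ t, f x p‖ ^ 2 < ε ^ 2 := by
      calc ‖∑ p ∈ t, f x p‖ ^ 2 ≤ η * ∑ p ∈ t, ‖P p.1 (X (P p.2 x))‖ ^ 2 := key x t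
        _ ≤ (η + 1) * ∑ p ∈ t, ‖P p.1 (X (P p.2 x))‖ ^ 2 := by
            have : (0:ℝ) ≤ ∑ p ∈ t, ‖P p.1 (X (P p.2 x))‖ ^ 2 :=
              Finset.sum_nonneg fun p _ => by positivity
            nlinarith
        _ < (η + 1) * (ε ^ 2 / (η + 1)) := by
            apply mul_lt_mul_of_pos_left h2 (by positivity)
        _ = ε ^ 2 := by field_simp
    exact lt_of_pow_lt_pow_left₀ 2 (le_of_lt hε) h3
  -- norm bound on the tsum
  have hbound : ∀ x : H, ‖∑' p, f x p‖ ≤ Real.sqrt η * ‖X‖ * ‖x‖ := by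
    intro x
    have hpos : (0:ℝ) ≤ Real.sqrt η * ‖X‖ * ‖x‖ := by positivity
    have hfin : ∀ S : Finset (ℤ × ℤ), ‖∑ p ∈ S, f x p‖ ≤ Real.sqrt η * ‖X‖ * ‖x‖ := by
      intro S
      have h1 : ‖∑ p ∈ S, f x p‖ ^ 2 ≤ (Real.sqrt η * ‖X‖ * ‖x‖) ^ 2 := by
        calc ‖∑ p ∈ S, f x p‖ ^ 2 ≤ η * ∑ p ∈ S, ‖P p.1 (X (P p.2 x))‖ ^ 2 := key x S
          _ ≤ η * (‖X‖ ^ 2 * ‖x‖ ^ 2) := by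
              apply mul_le_mul_of_nonneg_left _ hη0
              exact le_trans (Summable.sum_le_tsum S (fun p _ => by positivity) (hVsum x).1)
                (hVsum x).2
          _ = (Real.sqrt η * ‖X‖ * ‖x‖) ^ 2 := by
              rw [mul_pow, mul_pow, Real.sq_sqrt hη0]
              ring
      exact le_of_pow_le_pow_left₀ (by norm_num) hpos h1
    have htend : Filter.Tendsto (fun S : Finset (ℤ × ℤ) => ‖∑ p ∈ S, f x p‖)
        Filter.atTop (nhds ‖∑' p, f x p‖) :=
      (continuous_norm.tendsto _).comp (hSf x).hasSum
    exact le_of_tendsto htend (Filter.Eventually.of_forall hfin)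
  -- build the linear map
  have hadd : ∀ x y : H, (∑' p, f (x + y) p) = (∑' p, f x p) + (∑' p, f y p) := by
    intro x y
    have h1 : f (x + y) = fun p => f x p + f y p := by
      funext p
      simp only [hf]
      split_ifs with h
      · simp
      · rw [map_add, map_add, map_add, smul_add]
    rw [h1]
    exact Summable.tsum_add (hSf x) (hSf y)
  have hsmul : ∀ (c : ℂ) (x : H), (∑' p, f (c • x) p) = c • ∑' p, f x p := by
    intro c x
    have h1 : f (c • x) = fun p => c • f x p := by
      funext p
      simp only [hf]
      split_ifs with h
      · simp
      · rw [map_smul, map_smul, map_smul, smul_comm]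
    rw [h1]
    exact ((hSf x).hasSum.const_smul c).tsum_eq
  set Glin : H →ₗ[ℂ] H :=
    { toFun := fun x => ∑' p, f x p
      map_add' := hadd
      map_smul' := hsmul } with hGlin
  have hGb : ∀ x : H, ‖Glin x‖ ≤ Real.sqrt η * ‖X‖ * ‖x‖ := hbound
  refine ⟨Glin.mkContinuous (Real.sqrt η * ‖X‖) hGb, ?_, ?_⟩
  · intro x
    exact (hSf x).hasSum
  · exact Glin.mkContinuous_norm_le (by positivity) hGb
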